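/- Define ι_n : {1,…,4n} → {1,…,4n+4} by ι_n(1) = 4 and ι_n(i) = i + 4 for i > 1. For a partial permutation (S, T, σ) with S, T ⊆ {1,…,4n+4} disjoint from h, let (S,T,σ)_h = (S ∪ {h}, T ∪ {h}, σ_h) where σ_h extends σ by σ_h(h) = h. Then the F₂-linear map L_n sending a basis partial permutation (S, T, σ) on {1,…,4n} to Σ_{h ∈ {1,3}} (ι_n(S), ι_n(T), ι_n ∘ σ ∘ ι_n^{-1})_h is injective. Moreover the image of L_n commutes with the element ρ_{1,3} in the sense that [ρ_{1,3}, L_n(ρ)] = ρ_{1,3}L_n(ρ) + L_n(ρ)ρ_{1,3} = 0 for all ρ, where ρ_{1,3} is the strand from 1 to 3. -/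

import Mathlib

open scoped Classical

namespace Stmt19

/-- A (raw) partial permutation: a pair of subsets `S, T ⊆ ℕ` together with a strand function
`σ : ℕ → ℕ` (normalized to be the identity away from `S`). -/
abbrev Raw : Type := Finset ℕ × Finset ℕ × (ℕ → ℕ)

/-- The strands-algebra-type module: formal `F₂`-linear combinations of partial
permutations. -/
abbrev SAlg : Type := Raw →₀ ZMod 2

/-- Multiplication of strand diagrams: concatenation when the right endpoints of the first
match the left endpoints of the second, and zero otherwise. -/
noncomputable def smul' (x y : SAlg) : SAlg :=
  x.sum fun p a => y.sum fun q b =>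
    if p.2.1 = q.1 then
      Finsupp.single (p.1, q.2.1, fun j => if j ∈ p.1 then q.2.2 (p.2.2 j) else j) (a * b)
    else 0

/-- The injection `ι_n` on points: `ι_n 1 = 4` and `ι_n i = i + 4` otherwise. -/
def iot : ℕ → ℕ := fun i => if i = 1 then 4 else i + 4

/-- Partial inverse of `iot`. -/
def iotInv : ℕ → ℕ := fun j => if j = 4 then 1 else j - 4

/-- Insertion of a horizontal strand at height `h` into the `ι_n`-translated diagram:
`(S,T,σ) ↦ (ι_n(S) ∪ {h}, ι_n(T) ∪ {h}, σ_h)` with `σ_h(h) = h`. -/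
def Th (h : ℕ) (p : Raw) : Raw :=
  (insert h (p.1.image iot), insert h (p.2.1.image iot),
    fun j => if j = h then h else if j ∈ p.1.image iot then iot (p.2.2 (iotInv j)) else j)

/-- The linear map `L_n : A_n → A_{n+1}`, sending a basis partial permutation `(S,T,σ)` to
`Σ_{h ∈ {1,3}} (ι_n(S), ι_n(T), ι_n ∘ σ ∘ ι_n⁻¹)_h`. -/
noncomputable def Lmap : SAlg →ₗ[ZMod 2] SAlg :=
  Finsupp.lsum (ZMod 2) fun p =>
    LinearMap.toSpanSingleton (ZMod 2) SAlg
      (Finsupp.single (Th 1 p) 1 + Finsupp.single (Th 3 p) 1)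

/-- Genuine partial permutations on `{1,…,4n}`: `σ` restricts to a nondecreasing bijection
`S → T` (and is the identity elsewhere). -/
def Good (n : ℕ) (p : Raw) : Prop :=
  p.1 ⊆ Finset.Icc 1 (4 * n) ∧ p.2.1 ⊆ Finset.Icc 1 (4 * n) ∧
    Set.BijOn p.2.2 ↑p.1 ↑p.2.1 ∧ MonotoneOn p.2.2 ↑p.1 ∧
    ∀ j ∉ p.1, p.2.2 j = j

/-- The algebra element `ρ_{1,3}` of `A_{n+1}`: the strand from 1 to 3, summed over all
horizontal completions. -/
noncomputable def rho13 (n : ℕ) : SAlg :=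
  ∑ V ∈ ((Finset.Icc 1 (4 * n + 4)) \ {1, 3}).powerset,
    Finsupp.single (insert 1 V, insert 3 V, fun j => if j = 1 then 3 else j) 1

/-! ### auxiliary lemmas -/

lemma iot_ge (i : ℕ) : 4 ≤ iot i := by unfold iot; split <;> omega
lemma iot_ne_one (i : ℕ) : iot i ≠ 1 := by have := iot_ge i; omega
lemma iot_ne_three (i : ℕ) : iot i ≠ 3 := by have := iot_ge i; omega

lemma iotInv_iot {i : ℕ} (h : 1 ≤ i) : iotInv (iot i) = i := by
  unfold iot iotInv; split_ifs <;> omega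

lemma iot_inj {a b : ℕ} (ha : 1 ≤ a) (hb : 1 ≤ b) (h : iot a = iot b) : a = b := by
  rw [← iotInv_iot ha, h, iotInv_iot hb]

lemma not_one_mem_image (s : Finset ℕ) : (1 : ℕ) ∉ s.image iot := by
  simp only [Finset.mem_image, not_exists]
  intro i hi
  exact iot_ne_one i hi.2

lemma not_three_mem_image (s : Finset ℕ) : (3 : ℕ) ∉ s.image iot := by
  simp only [Finset.mem_image, not_exists]
  intro i hi
  exact iot_ne_three i hi.2

lemma image_iot_inj {S S' : Finset ℕ} (hS : ∀ i ∈ S, 1 ≤ i) (hS' : ∀ i ∈ S', 1 ≤ i)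
    (h : S.image iot = S'.image iot) : S = S' := by
  have e : ∀ (X : Finset ℕ), (∀ i ∈ X, 1 ≤ i) → (X.image iot).image iotInv = X := by
    intro X hX
    rw [Finset.image_image]
    calc X.image (iotInv ∘ iot) = X.image id :=
          Finset.image_congr (fun i hi => iotInv_iot (hX i hi))
      _ = X := Finset.image_id
  rw [← e S hS, ← e S' hS', h]

lemma th1_inj {n : ℕ} {p q : Raw} (hp : Good n p) (hq : Good n q) (h : Th 1 p = Th 1 q) :
    p = q := by
  obtain ⟨h1, h23⟩ := Prod.mk.injEq .. ▸ h
  obtain ⟨h2, h3⟩ := Prod.mk.injEq .. ▸ h23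
  have hpos : ∀ i ∈ p.1, 1 ≤ i := fun i hi => (Finset.mem_Icc.mp (hp.1 hi)).1
  have hqos : ∀ i ∈ q.1, 1 ≤ i := fun i hi => (Finset.mem_Icc.mp (hq.1 hi)).1
  have hS : p.1 = q.1 := by
    apply image_iot_inj hpos hqos
    have := congrArg (fun s => s.erase 1) h1
    simpa [Finset.erase_insert (not_one_mem_image p.1),
      Finset.erase_insert (not_one_mem_image q.1)] using this
  have hT : p.2.1 = q.2.1 := by
    apply image_iot_inj (fun i hi => (Finset.mem_Icc.mp (hp.2.1 hi)).1)
      (fun i hi => (Finset.mem_Icc.mp (hq.2.1 hi)).1)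
    have := congrArg (fun s => s.erase 1) h2
    simpa [Finset.erase_insert (not_one_mem_image p.2.1),
      Finset.erase_insert (not_one_mem_image q.2.1)] using this
  have hσ : p.2.2 = q.2.2 := by
    funext j
    by_cases hj : j ∈ p.1
    · have hj1 : 1 ≤ j := hpos j hj
      have := congrFun h3 (iot j)
      have hne1 : iot j ≠ 1 := iot_ne_one j
      have hmem : iot j ∈ p.1.image iot := Finset.mem_image_of_mem _ hj
      have hmem' : iot j ∈ q.1.image iot := Finset.mem_image_of_mem _ (hS ▸ hj)
      simp only [hne1, if_neg, hmem, hmem', if_pos, iotInv_iot hj1, if_false, if_true] at this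
      have hpj : 1 ≤ p.2.2 j :=
        (Finset.mem_Icc.mp (hp.2.1 (hp.2.2.1.1 hj))).1
      have hqj : 1 ≤ q.2.2 j :=
        (Finset.mem_Icc.mp (hq.2.1 (hq.2.2.1.1 (hS ▸ hj)))).1
      exact iot_inj hpj hqj this
    · rw [hp.2.2.2.2 j hj, hq.2.2.2.2 j (hS ▸ hj)]
  exact Prod.ext hS (Prod.ext hT hσ)

lemma th3_ne_th1 (p q : Raw) : Th 3 q ≠ Th 1 p := by
  intro h
  have := congrArg (fun r : Raw => (1 : ℕ) ∈ r.1) h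
  simp only [Th, Finset.mem_insert, Finset.mem_image] at this
  rw [eq_iff_iff] at this
  obtain (h1 | ⟨a, _, ha⟩) := this.mpr (Or.inl trivial)
  · exact absurd h1 (by norm_num)
  · exact iot_ne_one a ha

/-! ### multiplication lemmas -/

lemma smul'_zero_left (y : SAlg) : smul' 0 y = 0 := by
  simp [smul']

lemma smul'_zero_right (x : SAlg) : smul' x 0 = 0 := by
  simp [smul']

lemma smul'_add_left (x x' y : SAlg) : smul' (x + x') y = smul' x y + smul' x' y := by
  unfold smul'
  apply Finsupp.sum_add_index'
  · intro p; simp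
  · intro p a a'
    rw [← Finsupp.sum_add]
    apply Finsupp.sum_congr
    intro q _
    split_ifs with hc
    · rw [add_mul, Finsupp.single_add]
    · rw [add_zero]

lemma smul'_add_right (x y y' : SAlg) : smul' x (y + y') = smul' x y + smul' x y' := by
  unfold smul'
  rw [← Finsupp.sum_add]
  apply Finsupp.sum_congr
  intro p _
  apply Finsupp.sum_add_index'
  · intro q; simp
  · intro q b b'
    split_ifs with hc
    · rw [mul_add, Finsupp.single_add]
    · rw [add_zero]

noncomputable def mulR (x : SAlg) : SAlg →+ SAlg :=
  ⟨⟨fun y => smul' x y, smul'_zero_right x⟩, fun a b => smul'_add_right x a b⟩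

noncomputable def mulL (y : SAlg) : SAlg →+ SAlg :=
  ⟨⟨fun x => smul' x y, smul'_zero_left y⟩, fun a b => smul'_add_left a b y⟩

lemma smul'_single_single (p q : Raw) (a b : ZMod 2) :
    smul' (Finsupp.single p a) (Finsupp.single q b) =
      if p.2.1 = q.1 then
        Finsupp.single (p.1, q.2.1, fun j => if j ∈ p.1 then q.2.2 (p.2.2 j) else j) (a * b)
      else 0 := by
  unfold smul'
  rw [Finsupp.sum_single_index, Finsupp.sum_single_index]
  · simp
  · simp [Finsupp.sum]


lemma smul'_sum_left {ι : Type*} (s : Finset ι) (f : ι → SAlg) (y : SAlg) :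
    smul' (∑ V ∈ s, f V) y = ∑ V ∈ s, smul' (f V) y :=
  map_sum (mulL y) f s

lemma smul'_sum_right {ι : Type*} (s : Finset ι) (f : ι → SAlg) (x : SAlg) :
    smul' x (∑ V ∈ s, f V) = ∑ V ∈ s, smul' x (f V) :=
  map_sum (mulR x) f s

lemma smul'_finsupp_sum_right (x : SAlg) (f : SAlg) (g : Raw → ZMod 2 → SAlg) :
    smul' x (f.sum g) = f.sum fun p a => smul' x (g p a) :=
  map_finsuppSum (mulR x) f g

lemma smul'_finsupp_sum_left (y : SAlg) (f : SAlg) (g : Raw → ZMod 2 → SAlg) :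
    smul' (f.sum g) y = f.sum fun p a => smul' (g p a) y :=
  map_finsuppSum (mulL y) f g

lemma mem_powerset_imgS {n : ℕ} {X : Finset ℕ} (hX : X ⊆ Finset.Icc 1 (4 * n)) :
    X.image iot ∈ ((Finset.Icc 1 (4 * n + 4)) \ {1, 3}).powerset := by
  rw [Finset.mem_powerset]
  intro j hj
  obtain ⟨i, hi, rfl⟩ := Finset.mem_image.mp hj
  have h2 := Finset.mem_Icc.mp (hX hi)
  have h4 := iot_ge i
  have hle : iot i ≤ 4 * n + 4 := by unfold iot; split <;> omega
  simp only [Finset.mem_sdiff, Finset.mem_Icc, Finset.mem_insert, Finset.mem_singleton]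
  exact ⟨⟨by omega, hle⟩, by omega⟩

lemma rho_smul_th1 (n : ℕ) (p : Raw) (a : ZMod 2) :
    smul' (rho13 n) (Finsupp.single (Th 1 p) a) = 0 := by
  rw [rho13, smul'_sum_left]
  apply Finset.sum_eq_zero
  intro V hV
  rw [smul'_single_single, if_neg]
  intro h
  simp only [Th] at h
  have h1 : (1 : ℕ) ∈ insert 3 V := by rw [h]; exact Finset.mem_insert_self _ _
  have hV' := Finset.mem_powerset.mp hV
  rcases Finset.mem_insert.mp h1 with h' | h'
  · omega
  · have := hV' h'
    simp only [Finset.mem_sdiff, Finset.mem_insert, Finset.mem_singleton] at this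
    tauto

lemma th3_smul_rho (n : ℕ) (p : Raw) (a : ZMod 2) :
    smul' (Finsupp.single (Th 3 p) a) (rho13 n) = 0 := by
  rw [rho13, smul'_sum_right]
  apply Finset.sum_eq_zero
  intro V hV
  rw [smul'_single_single, if_neg]
  intro h
  simp only [Th] at h
  have h3 : (3 : ℕ) ∈ insert 1 V := by rw [← h]; exact Finset.mem_insert_self _ _
  have hV' := Finset.mem_powerset.mp hV
  rcases Finset.mem_insert.mp h3 with h' | h'
  · omega
  · have := hV' h'
    simp only [Finset.mem_sdiff, Finset.mem_insert, Finset.mem_singleton] at this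
    tauto

/-- The common product element. -/
def C3 (p : Raw) : Raw :=
  (insert 1 (p.1.image iot), (Th 3 p).2.1,
    fun j => if j ∈ insert 1 (p.1.image iot) then (Th 3 p).2.2 (if j = 1 then 3 else j) else j)

def C1 (p : Raw) : Raw :=
  ((Th 1 p).1, insert 3 (p.2.1.image iot),
    fun j => if j ∈ (Th 1 p).1 then
      (if (Th 1 p).2.2 j = 1 then 3 else (Th 1 p).2.2 j) else j)

lemma rho_smul_th3 (n : ℕ) {p : Raw} (hp : Good n p) (a : ZMod 2) :
    smul' (rho13 n) (Finsupp.single (Th 3 p) a) = Finsupp.single (C3 p) a := by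
  rw [rho13, smul'_sum_left]
  rw [Finset.sum_eq_single_of_mem (p.1.image iot) (mem_powerset_imgS hp.1)]
  · rw [smul'_single_single, if_pos (by simp only [Th])]
    rw [one_mul]
    rfl
  · intro V hV hne
    rw [smul'_single_single, if_neg]
    intro h
    simp only [Th] at h
    apply hne
    have h3V : (3 : ℕ) ∉ V := by
      intro h'
      have := Finset.mem_powerset.mp hV h'
      simp only [Finset.mem_sdiff, Finset.mem_insert, Finset.mem_singleton] at this
      tauto
    have := congrArg (fun s => s.erase 3) h
    simpa [Finset.erase_insert h3V, Finset.erase_insert (not_three_mem_image p.1)] using this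

lemma th1_smul_rho (n : ℕ) {p : Raw} (hp : Good n p) (a : ZMod 2) :
    smul' (Finsupp.single (Th 1 p) a) (rho13 n) = Finsupp.single (C1 p) a := by
  rw [rho13, smul'_sum_right]
  rw [Finset.sum_eq_single_of_mem (p.2.1.image iot) (mem_powerset_imgS hp.2.1)]
  · rw [smul'_single_single, if_pos (by simp only [Th])]
    rw [mul_one]
    rfl
  · intro V hV hne
    rw [smul'_single_single, if_neg]
    intro h
    simp only [Th] at h
    apply hne
    have h1V : (1 : ℕ) ∉ V := by
      intro h'
      have := Finset.mem_powerset.mp hV h'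
      simp only [Finset.mem_sdiff, Finset.mem_insert, Finset.mem_singleton] at this
      tauto
    have := congrArg (fun s => s.erase 1) h
    simpa [Finset.erase_insert h1V, Finset.erase_insert (not_one_mem_image p.2.1)] using this.symm

lemma C3_eq_C1 (p : Raw) : C3 p = C1 p := by
  unfold C3 C1 Th
  refine Prod.ext rfl (Prod.ext rfl ?_)
  funext j
  dsimp only
  by_cases hj : j ∈ insert 1 (p.1.image iot)
  · rw [if_pos hj, if_pos hj]
    rcases Finset.mem_insert.mp hj with rfl | hj'
    · norm_num
    · have hj1 : j ≠ 1 := fun h => not_one_mem_image p.1 (h ▸ hj')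
      have hj3 : j ≠ 3 := fun h => not_three_mem_image p.1 (h ▸ hj')
      simp only [if_neg hj1, if_neg hj3, if_pos hj', if_neg (iot_ne_one _)]
  · rw [if_neg hj, if_neg hj]



/-- The map `ι_n` is injective on `{1,…,4n}`; the `F₂`-linear map `L_n`
(sending a basis partial permutation `(S,T,σ)` on `{1,…,4n}` to
`Σ_{h∈{1,3}} (ι_n S, ι_n T, ι_n∘σ∘ι_n⁻¹)_h`) is injective on elements supported on genuine
partial permutations on `{1,…,4n}`; and the image of `L_n` commutes with `ρ_{1,3}`:
`ρ_{1,3}·L_n(ρ) + L_n(ρ)·ρ_{1,3} = 0` for all such `ρ`. -/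
theorem stmt19 (n : ℕ) :
    Set.InjOn iot ↑(Finset.Icc 1 (4 * n)) ∧
    Set.InjOn Lmap {x : SAlg | ∀ p ∈ x.support, Good n p} ∧
    (∀ x : SAlg, (∀ p ∈ x.support, Good n p) →
      smul' (rho13 n) (Lmap x) + smul' (Lmap x) (rho13 n) = 0) := by
  refine ⟨?_, ?_, ?_⟩
  · intro a ha b hb h
    simp only [Finset.coe_Icc, Set.mem_Icc] at ha hb
    unfold iot at h
    split_ifs at h <;> omega
  · have key : ∀ z : SAlg, (∀ p ∈ z.support, Good n p) → Lmap z = 0 → z = 0 := by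
      intro z hz hL
      ext p
      by_cases hps : p ∈ z.support
      swap
      · simpa using Finsupp.notMem_support_iff.mp hps
      have h0 : (Lmap z) (Th 1 p) = z p := by
        rw [Lmap, Finsupp.lsum_apply, Finsupp.sum_apply, Finsupp.sum]
        rw [Finset.sum_eq_single_of_mem p hps]
        · rw [LinearMap.toSpanSingleton_apply]
          simp [th3_ne_th1 p p, Finsupp.single_apply]
        · intro q hq hqp
          have h1 : Th 1 q ≠ Th 1 p := fun h => hqp (th1_inj (hz q hq) (hz p hps) h)
          rw [LinearMap.toSpanSingleton_apply]
          simp only [Finsupp.smul_apply, Finsupp.add_apply, Finsupp.single_apply,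
            if_neg h1]
          rw [if_neg (th3_ne_th1 p q)]
          simp
      rw [hL] at h0
      simpa using h0.symm
    intro x hx y hy hxy
    have hsub : ∀ p ∈ (x - y).support, Good n p := by
      intro p hp
      rcases Finset.mem_union.mp (Finsupp.support_sub hp) with h | h
      exacts [hx _ h, hy _ h]
    have := key (x - y) hsub (by rw [map_sub, hxy, sub_self])
    exact sub_eq_zero.mp this
  · intro x hx
    have hL : Lmap x = x.sum fun p a =>
        Finsupp.single (Th 1 p) a + Finsupp.single (Th 3 p) a := by
      rw [Lmap, Finsupp.lsum_apply]
      apply Finsupp.sum_congr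
      intro p _
      rw [LinearMap.toSpanSingleton_apply, smul_add, Finsupp.smul_single',
        Finsupp.smul_single', mul_one]
    rw [hL, smul'_finsupp_sum_right, smul'_finsupp_sum_left, ← Finsupp.sum_add]
    rw [Finsupp.sum_congr (g2 := fun _ _ => (0 : SAlg)) ?_, Finsupp.sum, Finset.sum_const_zero]
    intro p hp
    rw [smul'_add_right, smul'_add_left,
      rho_smul_th1 n p (x p), rho_smul_th3 n (hx p hp) (x p),
      th1_smul_rho n (hx p hp) (x p), th3_smul_rho n p (x p),
      zero_add, add_zero, C3_eq_C1, ← Finsupp.single_add,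
      CharTwo.add_self_eq_zero, Finsupp.single_zero]

end Stmt19
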